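/- Asymptotic inverse expansion (Lemma on ψ, Regime I): Suppose φ(s) = sr + ½σ²s² + K₁s^{η₁} + o(s^{η₁}) as s ↓ 0, with r, σ > 0, K₁ ∈ ℝ, η₁ > 2, and let ψ be the (local) inverse of φ with ψ(0)=0. Then for each fixed s > 0, as ε ↓ 0, ψ(sε(r-ε)) = sε - (1/r)sε² - (σ²/(2r))s²ε² + o(ε²). -/

import Mathlib

open Real Filter Topology Asymptotics

/-- Lemma on ψ, Regime I: if φ(s) = sr + ½σ²s² + K₁s^{η₁} + o(s^{η₁}) as
s ↓ 0 with η₁ > 2, and ψ is a (local) inverse of φ with ψ(0) = 0, then for fixed s > 0,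
ψ(sε(r-ε)) = sε - (1/r)sε² - (σ²/(2r))s²ε² + o(ε²) as ε ↓ 0. -/
theorem stmt_8 (r σ K₁ η₁ δ : ℝ) (hr : 0 < r) (hσ : 0 < σ) (hη : 2 < η₁) (hδ : 0 < δ)
    (φ ψ : ℝ → ℝ)
    (hmono : StrictMonoOn φ (Set.Ico 0 δ)) (hφ0 : φ 0 = 0)
    (hexp : (fun x => φ x - (x*r + σ^2/2 * x^2 + K₁ * x ^ η₁)) =o[𝓝[>] 0]
      fun x => x ^ η₁)
    (hψ0 : ψ 0 = 0)
    (hψ : ∀ᶠ y in 𝓝[>] (0:ℝ), ψ y ∈ Set.Ico 0 δ ∧ φ (ψ y) = y)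
    (s : ℝ) (hs : 0 < s) :
    (fun ε : ℝ => ψ (s*ε*(r-ε)) - (s*ε - (1/r)*s*ε^2 - (σ^2/(2*r))*s^2*ε^2)) =o[𝓝[>] 0]
      fun ε => ε^2 := by
  set l : Filter ℝ := 𝓝[>] (0:ℝ) with hl_def
  have hl : l ≤ 𝓝 0 := nhdsWithin_le_nhds
  have hεpos : ∀ᶠ ε in l, (0:ℝ) < ε := eventually_mem_nhdsWithin
  have hεr : ∀ᶠ ε in l, ε < r := (eventually_lt_nhds hr).filter_mono hl
  set y : ℝ → ℝ := fun ε => s*ε*(r-ε) with hy_def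
  have hy_pos : ∀ᶠ ε in l, 0 < y ε := by
    filter_upwards [hεpos, hεr] with ε h1 h2
    have : 0 < r - ε := by linarith
    positivity
  have hy0 : Tendsto y l (𝓝 0) := by
    have : Tendsto y (𝓝 0) (𝓝 (s*0*(r-0))) := by
      apply Continuous.tendsto; fun_prop
    simpa using this.mono_left hl
  have hy_tendsto : Tendsto y l l := by
    rw [hl_def, tendsto_nhdsWithin_iff]
    exact ⟨hy0, hy_pos⟩
  set u : ℝ → ℝ := fun ε => ψ (s*ε*(r-ε)) with hu_def
  have hu := hy_tendsto.eventually hψ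
  have hu_pos : ∀ᶠ ε in l, 0 < u ε := by
    filter_upwards [hu, hy_pos] with ε ⟨hmem, heq⟩ hyp
    rcases lt_or_eq_of_le hmem.1 with h | h
    · exact h
    · exfalso; rw [← h, hφ0] at heq; exact absurd heq.symm (ne_of_gt hyp)
  have hu0 : Tendsto u l (𝓝 0) := by
    rw [Metric.tendsto_nhds]
    intro η hη
    set η' : ℝ := min η δ / 2 with hη'_def
    have hη'pos : 0 < η' := by positivity
    have hη'δ : η' < δ := by
      have : min η δ ≤ δ := min_le_right _ _
      linarith
    have hη'η : η' < η := by
      have : min η δ ≤ η := min_le_left _ _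
      linarith
    have hφη' : 0 < φ η' := by
      have := hmono ⟨le_refl 0, hδ⟩ ⟨hη'pos.le, hη'δ⟩ hη'pos
      rwa [hφ0] at this
    have hylt : ∀ᶠ ε in l, y ε < φ η' := hy0.eventually (eventually_lt_nhds hφη')
    filter_upwards [hu, hylt, hy_pos] with ε ⟨hmem, heq⟩ hlt _
    have hult : u ε < η' := by
      by_contra h
      push_neg at h
      have := (hmono.monotoneOn) ⟨hη'pos.le, hη'δ⟩ hmem h
      rw [heq] at this
      linarith
    have hd : dist (u ε) 0 = u ε := by
      rw [Real.dist_eq, sub_zero]; exact abs_of_nonneg hmem.1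
    rw [hd]
    linarith
  have hu_tendsto : Tendsto u l l := by
    rw [hl_def, tendsto_nhdsWithin_iff]
    exact ⟨hu0, hu_pos⟩
  -- little-o of remainder at order 2
  have h1 : (fun x : ℝ => x ^ η₁) =o[l] fun x => x^2 := by
    rw [isLittleO_iff_tendsto']
    · have hcont : Tendsto (fun x : ℝ => x ^ (η₁ - 2)) l (𝓝 0) := by
        have := (Real.continuousAt_rpow_const 0 (η₁ - 2) (Or.inr (by linarith))).tendsto
        rw [Real.zero_rpow (by linarith : η₁ - 2 ≠ 0)] at this
        exact this.mono_left hl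
      apply hcont.congr'
      filter_upwards [hεpos] with x hx
      rw [← Real.rpow_natCast x 2, ← Real.rpow_sub hx]
      norm_num
    · filter_upwards [hεpos] with x hx h
      exact absurd h (by positivity)
  have hR' : (fun x => φ x - (x*r + σ^2/2 * x^2)) =o[l] fun x => x^2 := by
    have h2 : (fun x => φ x - (x*r + σ^2/2 * x^2 + K₁ * x ^ η₁)) =o[l] fun x => x^2 :=
      hexp.trans h1
    have h3 : (fun x : ℝ => K₁ * x ^ η₁) =o[l] fun x => x^2 := h1.const_mul_left K₁
    have := h2.add h3
    apply this.congr' _ EventuallyEq.rfl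
    filter_upwards with x
    ring
  have hRtendsto : Tendsto (fun x => (φ x - (x*r + σ^2/2 * x^2)) / x^2) l (𝓝 0) := by
    rw [← isLittleO_iff_tendsto']
    · exact hR'
    · filter_upwards [hεpos] with x hx h
      exact absurd h (by positivity)
  set g : ℝ → ℝ := fun ε => (φ (u ε) - (u ε * r + σ^2/2 * (u ε)^2)) / (u ε)^2 with hg_def
  have hg : Tendsto g l (𝓝 0) := hRtendsto.comp hu_tendsto
  -- key equation
  have hkey : ∀ᶠ ε in l, u ε * (r + (σ^2/2 + g ε) * u ε) = y ε := by
    filter_upwards [hu, hu_pos] with ε ⟨hmem, heq⟩ hup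
    have hune : u ε ≠ 0 := ne_of_gt hup
    have hgu : g ε * (u ε)^2 = φ (u ε) - (u ε * r + σ^2/2 * (u ε)^2) :=
      div_mul_cancel₀ _ (pow_ne_zero 2 hune)
    have heq' : φ (u ε) = y ε := heq
    linear_combination hgu + heq'
  set D : ℝ → ℝ := fun ε => r + (σ^2/2 + g ε) * u ε with hD_def
  have hD : Tendsto D l (𝓝 r) := by
    have : Tendsto D l (𝓝 (r + (σ^2/2 + 0) * 0)) :=
      tendsto_const_nhds.add ((tendsto_const_nhds.add hg).mul hu0)
    simpa using this
  have hD_pos : ∀ᶠ ε in l, 0 < D ε := hD.eventually (eventually_gt_nhds hr)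
  have hv_eq : (fun ε => u ε / ε) =ᶠ[l] fun ε => s * (r - ε) / D ε := by
    filter_upwards [hkey, hD_pos, hεpos] with ε hk hDp hep
    have h2 : u ε * D ε = s*ε*(r-ε) := hk
    rw [div_eq_div_iff (ne_of_gt hep) (ne_of_gt hDp)]
    linear_combination h2
  have hv : Tendsto (fun ε => u ε / ε) l (𝓝 s) := by
    have hnum : Tendsto (fun ε : ℝ => s * (r - ε)) l (𝓝 (s * (r - 0))) := by
      apply (Continuous.tendsto (by fun_prop) 0).mono_left hl
    have := hnum.div hD (ne_of_gt hr)
    rw [show s * (r - 0) / r = s by field_simp; ring] at this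
    exact this.congr' hv_eq.symm
  -- final
  rw [isLittleO_iff_tendsto']
  · have hF : Tendsto (fun ε => σ^2/(2*r)*s^2 - (σ^2/(2*r) + g ε / r) * (u ε / ε)^2) l
        (𝓝 (σ^2/(2*r)*s^2 - (σ^2/(2*r) + 0 / r) * s^2)) :=
      tendsto_const_nhds.sub ((tendsto_const_nhds.add (hg.div_const r)).mul (hv.pow 2))
    rw [show σ^2/(2*r)*s^2 - (σ^2/(2*r) + 0 / r) * s^2 = 0 by ring] at hF
    apply hF.congr'
    filter_upwards [hkey, hεpos, hu_pos] with ε hk hep hup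
    have hene : ε ≠ 0 := ne_of_gt hep
    have hrne : r ≠ 0 := ne_of_gt hr
    have hk2 : u ε * r + (σ^2/2 + g ε)*(u ε)^2 = s*ε*r - s*ε^2 := by
      linear_combination hk
    have huψ : ψ (s*ε*(r-ε)) = u ε := rfl
    rw [eq_div_iff (pow_ne_zero 2 hene), huψ]
    generalize hG : g ε = G at hk2 ⊢
    generalize hU : u ε = U at hk2 ⊢
    field_simp
    linear_combination (-2)*hk2
  · filter_upwards [hεpos] with ε hε h
    exact absurd h (by positivity)
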